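/- If a ≤ b ≤ c are positive integers with 1/a + 1/b + 1/c < 1, then 1/a + 1/b + 1/c ≤ 41/42, with equality only if (a,b,c) = (2,3,7). -/

import Mathlib

theorem hyperbolic_mu_le_41_42 (a b c : ℕ) (ha : 0 < a) (hab : a ≤ b) (hbc : b ≤ c)
    (hhyp : (1 : ℚ)/a + 1/b + 1/c < 1) :
    (1 : ℚ)/a + 1/b + 1/c ≤ 41/42 ∧
      ((1 : ℚ)/a + 1/b + 1/c = 41/42 → a = 2 ∧ b = 3 ∧ c = 7) := by
  have hb : 0 < b := lt_of_lt_of_le ha hab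
  have hc : 0 < c := lt_of_lt_of_le hb hbc
  have hcq : (0:ℚ) < c := by exact_mod_cast hc
  have hinv : ∀ m n : ℕ, 0 < m → m ≤ n → (1:ℚ)/(n:ℕ) ≤ 1/(m:ℕ) := by
    intro m n hm h
    apply one_div_le_one_div_of_le
    · exact_mod_cast hm
    · exact_mod_cast h
  have hlt2 : ∀ n k : ℕ, 0 < n → (1:ℚ)/n < 1/k → k < n := by
    intro n k hn h
    by_contra hle
    push_neg at hle
    exact absurd (hinv n k hn hle) (not_le.mpr h)
  have ha2 : 2 ≤ a := by
    by_contra h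
    push_neg at h
    interval_cases a
    have h1 : (0:ℚ) ≤ 1/b := by positivity
    have h2 : (0:ℚ) ≤ 1/c := by positivity
    simp only [one_div] at *
    push_cast at *
    linarith
  rcases lt_or_ge a 4 with h4 | h4
  · interval_cases a
    · -- a = 2
      rcases lt_or_ge b 5 with hb5 | hb5
      · interval_cases b
        · -- b = 2 : contradiction
          exfalso
          have h2 : (0:ℚ) ≤ 1/c := by positivity
          simp only [one_div] at *
          push_cast at *
          linarith
        · -- b = 3
          have hlt : (1:ℚ)/c < 1/(6:ℕ) := by
            push_cast at hhyp ⊢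
            norm_num at hhyp ⊢
            linarith
          have h7 : 7 ≤ c := hlt2 c 6 hc hlt
          have hle7 : (1:ℚ)/c ≤ 1/(7:ℕ) := hinv 7 c (by norm_num) h7
          constructor
          · simp only [one_div] at *
            push_cast at *
            norm_num at *
            linarith
          · intro heq
            refine ⟨rfl, rfl, ?_⟩
            have hcne : (c:ℚ) ≠ 0 := ne_of_gt hcq
            have : (c:ℚ) = 7 := by
              field_simp at heq
              push_cast at heq
              linarith
            exact_mod_cast this
        · -- b = 4
          have hlt : (1:ℚ)/c < 1/(4:ℕ) := by
            push_cast at hhyp ⊢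
            norm_num at hhyp ⊢
            linarith
          have h5 : 5 ≤ c := hlt2 c 4 hc hlt
          have hle5 : (1:ℚ)/c ≤ 1/(5:ℕ) := hinv 5 c (by norm_num) h5
          have hfin : (1:ℚ)/(2:ℕ) + 1/(4:ℕ) + 1/c < 41/42 := by
            simp only [one_div] at *
            push_cast at *
            norm_num at *
            linarith
          exact ⟨le_of_lt hfin, fun heq => absurd heq (ne_of_lt hfin)⟩
      · -- b ≥ 5
        have hb5' : (1:ℚ)/b ≤ 1/(5:ℕ) := hinv 5 b (by norm_num) hb5
        have hc5' : (1:ℚ)/c ≤ 1/(5:ℕ) := hinv 5 c (by norm_num) (le_trans hb5 hbc)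
        have hfin : (1:ℚ)/(2:ℕ) + 1/b + 1/c < 41/42 := by
          simp only [one_div] at *
          push_cast at *
          norm_num at *
          linarith
        exact ⟨le_of_lt hfin, fun heq => absurd heq (ne_of_lt hfin)⟩
    · -- a = 3
      rcases lt_or_ge b 4 with hb4 | hb4
      · interval_cases b
        -- b = 3
        have hlt : (1:ℚ)/c < 1/(3:ℕ) := by
          push_cast at hhyp ⊢
          norm_num at hhyp ⊢
          linarith
        have h4' : 4 ≤ c := hlt2 c 3 hc hlt
        have hle4 : (1:ℚ)/c ≤ 1/(4:ℕ) := hinv 4 c (by norm_num) h4'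
        have hfin : (1:ℚ)/(3:ℕ) + 1/(3:ℕ) + 1/c < 41/42 := by
          simp only [one_div] at *
          push_cast at *
          norm_num at *
          linarith
        exact ⟨le_of_lt hfin, fun heq => absurd heq (ne_of_lt hfin)⟩
      · -- b ≥ 4
        have hb4' : (1:ℚ)/b ≤ 1/(4:ℕ) := hinv 4 b (by norm_num) hb4
        have hc4' : (1:ℚ)/c ≤ 1/(4:ℕ) := hinv 4 c (by norm_num) (le_trans hb4 hbc)
        have hfin : (1:ℚ)/(3:ℕ) + 1/b + 1/c < 41/42 := by
          simp only [one_div] at *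
          push_cast at *
          norm_num at *
          linarith
        exact ⟨le_of_lt hfin, fun heq => absurd heq (ne_of_lt hfin)⟩
  · -- a ≥ 4
    have ha4 : (1:ℚ)/a ≤ 1/(4:ℕ) := hinv 4 a (by norm_num) h4
    have hb4 : (1:ℚ)/b ≤ 1/(4:ℕ) := hinv 4 b (by norm_num) (le_trans h4 hab)
    have hc4 : (1:ℚ)/c ≤ 1/(4:ℕ) := hinv 4 c (by norm_num) (le_trans (le_trans h4 hab) hbc)
    have hfin : (1:ℚ)/a + 1/b + 1/c < 41/42 := by
      simp only [one_div] at *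
      push_cast at *
      norm_num at *
      linarith
    exact ⟨le_of_lt hfin, fun heq => absurd heq (ne_of_lt hfin)⟩
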